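/- arXiv:1704.04473 — 3 statements merged into one kernel-verified Lean document; each statement's English description precedes it below -/
import Mathlib

section
/- Let u_1,…,u_ℓ be a t-clustering of a finite simple unweighted undirected graph G, and let H be a spanning subgraph of G that contains every edge of G_ℓ and satisfies, for every i ∈ {1,…,ℓ} and every vertex x reachable from u_i in G_{i-1}, d_H(u_i,x) ≤ d_{G_{i-1}}(u_i,x). Then H is an additive 2-spanner of G, i.e., d_H(u,v) ≤ d_G(u,v) + 2 for every pair of vertices u, v connected in G. -/
open SimpleGraph

/-- The closed neighborhood of a vertex as a `Finset`. -/
def closedNbhd {V : Type*} [Fintype V] [DecidableEq V] (G : SimpleGraph V)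
    [DecidableRel G.Adj] (v : V) : Finset V :=
  insert v (G.neighborFinset v)

/-- `clustered G u i` is the union `C_1 ∪ … ∪ C_i` of the first `i` clusters of the
sequence `u` (0-indexed: the clusters of `u 0, …, u (i-1)`).  It equals the union of the
closed neighborhoods of `u 0, …, u (i-1)`. -/
def clustered {V : Type*} [Fintype V] [DecidableEq V] (G : SimpleGraph V)
    [DecidableRel G.Adj] (u : ℕ → V) : ℕ → Finset V
  | 0 => ∅
  | i + 1 => clustered G u i ∪ closedNbhd G (u i)

/-- The `i`-th cluster `C_i = (Γ_G(u_i) ∪ {u_i}) \ (C_1 ∪ … ∪ C_{i-1})` (0-indexed). -/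
def cluster {V : Type*} [Fintype V] [DecidableEq V] (G : SimpleGraph V)
    [DecidableRel G.Adj] (u : ℕ → V) (i : ℕ) : Finset V :=
  closedNbhd G (u i) \ clustered G u i

/-- The graph `G_i`: the subgraph of `G` containing exactly those edges of `G`
whose endpoints do not both lie in `C_1 ∪ … ∪ C_i`. -/
def level {V : Type*} [Fintype V] [DecidableEq V] (G : SimpleGraph V)
    [DecidableRel G.Adj] (u : ℕ → V) (i : ℕ) : SimpleGraph V where
  Adj a b := G.Adj a b ∧ ¬(a ∈ clustered G u i ∧ b ∈ clustered G u i)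
  symm := ⟨fun a b h => ⟨h.1.symm, fun hc => h.2 ⟨hc.2, hc.1⟩⟩⟩
  loopless := ⟨fun a h => G.irrefl h.1⟩

/-- `u 0, …, u (ℓ-1)` is a `t`-clustering of `G`:
(i) each `u i` maximizes `|(Γ_G(v) ∪ {v}) \ (C_1 ∪ … ∪ C_{i-1})|` over all vertices `v`,
(ii) every cluster `C_i` has at least `t` vertices, and
(iii) for every vertex `v`, `|(Γ_G(v) ∪ {v}) \ (C_1 ∪ … ∪ C_ℓ)| < t`. -/
def IsClustering {V : Type*} [Fintype V] [DecidableEq V] (G : SimpleGraph V)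
    [DecidableRel G.Adj] (t ℓ : ℕ) (u : ℕ → V) : Prop :=
  (∀ i < ℓ, ∀ v : V,
      (closedNbhd G v \ clustered G u i).card ≤ (cluster G u i).card) ∧
  (∀ i < ℓ, t ≤ (cluster G u i).card) ∧
  (∀ v : V, (closedNbhd G v \ clustered G u ℓ).card < t)

/-- Let `u 0, …, u (ℓ-1)` be a `t`-clustering of a finite graph `G`, and let `H` be a
spanning subgraph of `G` that contains every edge of `G_ℓ` and satisfies, for every
index `i < ℓ` and every vertex `x` reachable from `u i` in `G_{i-1}` (which, in our
0-indexed notation, is `level G u i`), `d_H(u i, x) ≤ d_{G_{i-1}}(u i, x)`.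
Then `H` is an additive `2`-spanner of `G`. -/
theorem stmt_6 {V : Type*} [Fintype V] [DecidableEq V] (G : SimpleGraph V)
    [DecidableRel G.Adj] (t ℓ : ℕ) (u : ℕ → V) (h : IsClustering G t ℓ u)
    (H : SimpleGraph V) (hHG : H ≤ G) (hlev : level G u ℓ ≤ H)
    (htree : ∀ i < ℓ, ∀ x : V, (level G u i).Reachable (u i) x →
      H.edist (u i) x ≤ (level G u i).edist (u i) x) :
    ∀ a b : V, G.Reachable a b → H.edist a b ≤ G.edist a b + 2 := by
  classical
  intro a b hab
  obtain ⟨W, hW⟩ := hab.exists_walk_length_eq_edist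
  by_cases hall : ∀ e ∈ W.edges, e ∈ (level G u ℓ).edgeSet
  · -- the whole walk survives in `level G u ℓ ≤ H`
    calc H.edist a b ≤ (level G u ℓ).edist a b := edist_anti hlev
      _ ≤ (W.transfer (level G u ℓ) hall).length := SimpleGraph.edist_le _
      _ = (W.length : ℕ∞) := by rw [Walk.length_transfer]
      _ ≤ G.edist a b + 2 := by rw [hW]; exact le_self_add
  · -- find the minimal stage where some edge of `W` dies
    have h0 : ∀ e ∈ W.edges, e ∈ (level G u 0).edgeSet := by
      intro e he
      induction e with
      | h x y =>
        exact ⟨W.edges_subset_edgeSet he, by simp [clustered]⟩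
    have hex : ∃ j, ¬ ∀ e ∈ W.edges, e ∈ (level G u j).edgeSet := ⟨ℓ, hall⟩
    have hjfail := Nat.find_spec hex
    have hjle : Nat.find hex ≤ ℓ := Nat.find_le hall
    have hjne : Nat.find hex ≠ 0 := by
      intro h0'
      rw [h0'] at hjfail
      exact hjfail h0
    obtain ⟨i, hji⟩ : ∃ i, Nat.find hex = i + 1 :=
      ⟨Nat.find hex - 1, (Nat.succ_pred_eq_of_pos (Nat.pos_of_ne_zero hjne)).symm⟩
    have hiℓ : i < ℓ := by omega
    have hprev : ∀ e ∈ W.edges, e ∈ (level G u i).edgeSet :=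
      not_not.mp (Nat.find_min hex (by omega))
    rw [hji] at hjfail
    push_neg at hjfail
    obtain ⟨e, heW, henot⟩ := hjfail
    -- it suffices to find a vertex `z` on `W` close to `u i` in `level G u i`
    suffices key : ∀ z : V, z ∈ W.support → z ∈ closedNbhd G (u i) → z ∉ clustered G u i →
        H.edist a b ≤ G.edist a b + 2 by
      induction e with
      | h x y =>
        have hmem : x ∈ W.support ∧ y ∈ W.support :=
          ⟨W.fst_mem_support_of_mem_edges heW, W.snd_mem_support_of_mem_edges heW⟩
        have hlev_i : (level G u i).Adj x y := hprev _ heW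
        have hnot : ¬ (level G u (i+1)).Adj x y := henot
        have hcl : x ∈ clustered G u (i+1) ∧ y ∈ clustered G u (i+1) := by
          by_contra hc
          exact hnot ⟨hlev_i.1, hc⟩
        rcases not_and_or.mp hlev_i.2 with hx | hy
        · have : x ∈ clustered G u i ∪ closedNbhd G (u i) := hcl.1
          rcases Finset.mem_union.mp this with h' | h'
          · exact absurd h' hx
          · exact key x hmem.1 h' hx
        · have : y ∈ clustered G u i ∪ closedNbhd G (u i) := hcl.2
          rcases Finset.mem_union.mp this with h' | h'
          · exact absurd h' hy
          · exact key y hmem.2 h' hy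
    intro z hzW hznb hzcl
    -- transfer `W` to `level G u i` and split at `z`
    set P := W.transfer (level G u i) hprev with hP
    have hzP : z ∈ P.support := by rw [hP, Walk.support_transfer]; exact hzW
    set q := P.takeUntil z hzP with hq
    set r := P.dropUntil z hzP with hr
    have hlen : q.length + r.length = W.length := by
      have := congrArg Walk.length (P.take_spec hzP)
      rwa [Walk.length_append, Walk.length_transfer] at this
    -- `u i` is within distance 1 of `z` in `level G u i`
    have huz : (level G u i).edist (u i) z ≤ 1 := by
      rcases Finset.mem_insert.mp hznb with rfl | hadj
      · simp [SimpleGraph.edist_self]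
      · have : (level G u i).Adj (u i) z :=
          ⟨(G.mem_neighborFinset _ _).mp hadj, fun hc => hzcl hc.2⟩
        exact (edist_eq_one_iff_adj.mpr this).le
    have hreach_z : (level G u i).Reachable (u i) z :=
      reachable_of_edist_ne_top (by intro h'; rw [h'] at huz; exact absurd huz (by simp))
    have hreach_a : (level G u i).Reachable (u i) a :=
      hreach_z.trans q.reverse.reachable
    have hreach_b : (level G u i).Reachable (u i) b :=
      hreach_z.trans r.reachable
    have hda : H.edist (u i) a ≤ 1 + q.length := by
      calc H.edist (u i) a ≤ (level G u i).edist (u i) a := htree i hiℓ a hreach_a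
        _ ≤ (level G u i).edist (u i) z + (level G u i).edist z a :=
            SimpleGraph.edist_triangle
        _ ≤ 1 + q.reverse.length := add_le_add huz (SimpleGraph.edist_le _)
        _ = 1 + q.length := by rw [Walk.length_reverse]
    have hdb : H.edist (u i) b ≤ 1 + r.length := by
      calc H.edist (u i) b ≤ (level G u i).edist (u i) b := htree i hiℓ b hreach_b
        _ ≤ (level G u i).edist (u i) z + (level G u i).edist z b :=
            SimpleGraph.edist_triangle
        _ ≤ 1 + r.length := add_le_add huz (SimpleGraph.edist_le _)
    calc H.edist a b ≤ H.edist a (u i) + H.edist (u i) b := SimpleGraph.edist_triangle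
      _ = H.edist (u i) a + H.edist (u i) b := by rw [SimpleGraph.edist_comm]
      _ ≤ (1 + q.length) + (1 + r.length) := add_le_add hda hdb
      _ = ((q.length + r.length : ℕ) : ℕ∞) + 2 := by push_cast; ring
      _ = (W.length : ℕ∞) + 2 := by rw [hlen]
      _ = G.edist a b + 2 := by rw [hW]
end

section
/- Let u_1,…,u_ℓ be a t-clustering of a finite simple unweighted undirected graph G, and let u, v be vertices of G such that some shortest path from u to v in G is not contained in the subgraph G_ℓ. Then there exist indices i, i' ∈ {1,…,ℓ} such that d_{G_{i-1}}(u_i,u) + d_{G_{i'-1}}(u_{i'},v) ≤ d_G(u,v) + 1, where u is reachable from u_i in G_{i-1} and v is reachable from u_{i'} in G_{i'-1}. -/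
open SimpleGraph

lemma mem_clustered {V : Type*} [Fintype V] [DecidableEq V] (G : SimpleGraph V)
    [DecidableRel G.Adj] (u : ℕ → V) {v : V} {n : ℕ} (h : v ∈ clustered G u n) :
    ∃ j < n, v ∈ cluster G u j := by
  induction n with
  | zero => simp [clustered] at h
  | succ n ih =>
    rw [clustered, Finset.mem_union] at h
    rcases h with h | h
    · obtain ⟨j, hj, hc⟩ := ih h
      exact ⟨j, Nat.lt_succ_of_lt hj, hc⟩
    · by_cases hv : v ∈ clustered G u n
      · obtain ⟨j, hj, hc⟩ := ih hv
        exact ⟨j, Nat.lt_succ_of_lt hj, hc⟩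
      · exact ⟨n, Nat.lt_succ_self n, Finset.mem_sdiff.mpr ⟨h, hv⟩⟩

lemma side_edist {V : Type*} [Fintype V] [DecidableEq V] (G : SimpleGraph V)
    [DecidableRel G.Adj] (u : ℕ → V) {a x : V} {ℓ : ℕ} (p : G.Walk a x)
    (hx : x ∈ clustered G u ℓ) :
    ∃ i < ℓ, (level G u i).edist (u i) a ≤ (p.length : ℕ∞) + 1 := by
  classical
  have hS : ∃ j, j < ℓ ∧ ∃ w ∈ p.support, w ∈ cluster G u j := by
    obtain ⟨j, hj, hc⟩ := mem_clustered G u hx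
    exact ⟨j, hj, x, p.end_mem_support, hc⟩
  set i := Nat.find hS with hidef
  obtain ⟨hiℓ, w, hw, hwc⟩ := Nat.find_spec hS
  have hmin : ∀ j < i, ¬(j < ℓ ∧ ∃ w ∈ p.support, w ∈ cluster G u j) :=
    fun j hj => Nat.find_min hS hj
  have hsup : ∀ w' ∈ p.support, w' ∉ clustered G u i := by
    intro w' hw' hc
    obtain ⟨j, hj, hcj⟩ := mem_clustered G u hc
    exact hmin j hj ⟨hj.trans hiℓ, w', hw', hcj⟩
  have hedges : ∀ e ∈ p.edges, e ∈ (level G u i).edgeSet := by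
    intro e he
    induction e using Sym2.ind with
    | _ c d =>
      have hc : c ∈ p.support := p.fst_mem_support_of_mem_edges he
      have hG : G.Adj c d := p.edges_subset_edgeSet he
      exact ⟨hG, fun hcd => hsup c hc hcd.1⟩
  let q : (level G u i).Walk a x := p.transfer _ hedges
  have hwq : w ∈ q.support := by rwa [Walk.support_transfer]
  have h1 : (level G u i).edist a w ≤ (p.length : ℕ∞) := by
    have := (q.takeUntil w hwq).edist_le
    have hlen : (q.takeUntil w hwq).length ≤ p.length := by
      have := q.length_takeUntil_le hwq
      simpa [q, Walk.length_transfer] using this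
    exact this.trans (by exact_mod_cast hlen)
  have h2 : (level G u i).edist (u i) w ≤ 1 := by
    rw [cluster, Finset.mem_sdiff] at hwc
    obtain ⟨hcn, hncl⟩ := hwc
    rw [closedNbhd, Finset.mem_insert, mem_neighborFinset] at hcn
    rcases hcn with rfl | hadj
    · exact (SimpleGraph.edist_self).trans_le zero_le_one
    · have : (level G u i).Adj (u i) w := ⟨hadj, fun hcd => hncl hcd.2⟩
      exact le_of_eq (edist_eq_one_iff_adj.mpr this)
  refine ⟨i, hiℓ, ?_⟩
  calc (level G u i).edist (u i) a ≤ (level G u i).edist (u i) w + (level G u i).edist w a :=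
        SimpleGraph.edist_triangle
    _ ≤ 1 + (p.length : ℕ∞) := add_le_add h2 (by rwa [SimpleGraph.edist_comm] at h1)
    _ = (p.length : ℕ∞) + 1 := add_comm _ _

lemma walk_split {V : Type*} (G : SimpleGraph V) {a b : V} (p : G.Walk a b) {e : Sym2 V}
    (he : e ∈ p.edges) :
    ∃ (x y : V) (q : G.Walk a x) (r : G.Walk y b),
      e = s(x, y) ∧ q.length + r.length + 1 = p.length := by
  induction p with
  | nil => simp at he
  | cons hadj p' ih =>
    rw [Walk.edges_cons, List.mem_cons] at he
    rcases he with rfl | he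
    · exact ⟨_, _, Walk.nil, p', rfl, by simp [Walk.length_cons]⟩
    · obtain ⟨x, y, q, r, rfl, hsum⟩ := ih he
      exact ⟨x, y, Walk.cons hadj q, r, rfl, by simp [Walk.length_cons]; omega⟩

/-- Let `u 0, …, u (ℓ-1)` be a `t`-clustering of a finite graph `G` and let `a`, `b` be
vertices such that some shortest path from `a` to `b` in `G` is not contained in the
subgraph `G_ℓ`.  Then there are indices `i, i' < ℓ` with
`d_{G_{i-1}}(u_i, a) + d_{G_{i'-1}}(u_{i'}, b) ≤ d_G(a,b) + 1` (in 1-indexed notation);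
here the graph in which distances from the 0-indexed center `u i` are measured is
`level G u i`, and the extended distances (`ℕ∞`) in particular force `a` to be reachable
from `u i` and `b` from `u i'` in the respective subgraphs. -/
theorem stmt_11 {V : Type*} [Fintype V] [DecidableEq V] (G : SimpleGraph V)
    [DecidableRel G.Adj] (t ℓ : ℕ) (u : ℕ → V) (h : IsClustering G t ℓ u)
    (a b : V)
    (hp : ∃ p : G.Walk a b, p.IsPath ∧ p.length = G.dist a b ∧
      ∃ e ∈ p.edges, e ∉ (level G u ℓ).edgeSet) :
    ∃ i < ℓ, ∃ i' < ℓ,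
      (level G u i).edist (u i) a + (level G u i').edist (u i') b
        ≤ G.edist a b + 1 := by
  obtain ⟨p, hpath, hlen, e, hep, hel⟩ := hp
  obtain ⟨x, y, q, r, rfl, hsum⟩ := walk_split G p hep
  have hGadj : G.Adj x y := p.edges_subset_edgeSet hep
  have hboth : x ∈ clustered G u ℓ ∧ y ∈ clustered G u ℓ := by
    by_contra hc
    exact hel ⟨hGadj, hc⟩
  obtain ⟨i, hiℓ, hi⟩ := side_edist G u q hboth.1
  obtain ⟨i', hi'ℓ, hi'⟩ := side_edist G u r.reverse (by simpa using hboth.2)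
  refine ⟨i, hiℓ, i', hi'ℓ, ?_⟩
  have hedist : (p.length : ℕ∞) ≤ G.edist a b := by
    obtain ⟨q0, hq0⟩ :=
      SimpleGraph.Reachable.exists_walk_length_eq_edist (⟨p⟩ : G.Reachable a b)
    rw [← hq0]
    exact_mod_cast hlen ▸ G.dist_le q0
  calc (level G u i).edist (u i) a + (level G u i').edist (u i') b
      ≤ ((q.length : ℕ∞) + 1) + ((r.reverse.length : ℕ∞) + 1) := add_le_add hi hi'
    _ = ((q.length + r.length + 1 : ℕ) : ℕ∞) + 1 := by
        rw [Walk.length_reverse]; push_cast; ring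
    _ = (p.length : ℕ∞) + 1 := by rw [hsum]
    _ ≤ G.edist a b + 1 := add_le_add_left hedist 1
end

section
/- Let u_1,…,u_ℓ be a t-clustering of a finite simple unweighted undirected graph G on n vertices, with t = n^{1/3} (so that ℓ ≤ n^{2/3}). Then the spanning subgraph H of G whose edge set consists of all edges of G_ℓ together with all edges of G between each u_i and the vertices of C_i \ {u_i} has at most n^{4/3} + n edges. -/
open SimpleGraph

/-- The set of edges of `G` joining each cluster center `u i` (for `i < ℓ`) to the
other vertices of its cluster `C_i \ {u i}`. -/
def clusterEdges {V : Type*} [Fintype V] [DecidableEq V] (G : SimpleGraph V)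
    [DecidableRel G.Adj] (u : ℕ → V) (ℓ : ℕ) : Set (Sym2 V) :=
  {e | ∃ i < ℓ, ∃ x ∈ cluster G u i, x ≠ u i ∧ e = s(u i, x)}

lemma clustered_mono {V : Type*} [Fintype V] [DecidableEq V] (G : SimpleGraph V)
    [DecidableRel G.Adj] (u : ℕ → V) {i j : ℕ} (hij : i ≤ j) :
    clustered G u i ⊆ clustered G u j := by
  induction j with
  | zero => rw [Nat.le_zero.mp hij]
  | succ j ih =>
    rcases Nat.eq_or_lt_of_le hij with rfl | hlt
    · exact subset_rfl
    · exact (ih (Nat.lt_succ_iff.mp hlt)).trans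
        (by rw [clustered]; exact Finset.subset_union_left)

lemma cluster_disjoint {V : Type*} [Fintype V] [DecidableEq V] (G : SimpleGraph V)
    [DecidableRel G.Adj] (u : ℕ → V) {i j : ℕ} (hij : i ≠ j) :
    Disjoint (cluster G u i) (cluster G u j) := by
  wlog hlt : i < j generalizing i j
  · exact (this hij.symm (by omega)).symm
  · have hsub : cluster G u i ⊆ clustered G u j := by
      refine (Finset.sdiff_subset.trans ?_).trans (clustered_mono G u hlt)
      rw [clustered]; exact Finset.subset_union_right
    rw [Finset.disjoint_left]
    intro a ha ha'
    exact (Finset.mem_sdiff.mp ha').2 (hsub ha)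

/-- Let `u 0, …, u (ℓ-1)` be a `t`-clustering of a finite graph `G` on `n` vertices
with `t = n^(1/3)`.  Then the spanning subgraph of `G` whose edge set consists of all
edges of `G_ℓ` together with all edges of `G` between each `u i` and the vertices of
`C_i \ {u i}` has at most `n^(4/3) + n` edges. -/
theorem stmt_12 {V : Type*} [Fintype V] [DecidableEq V] (G : SimpleGraph V)
    [DecidableRel G.Adj] (t ℓ : ℕ) (u : ℕ → V) (h : IsClustering G t ℓ u)
    (ht : (t : ℝ) = (Fintype.card V : ℝ) ^ ((1 : ℝ) / 3)) :
    ((SimpleGraph.fromEdgeSet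
        ((level G u ℓ).edgeSet ∪ clusterEdges G u ℓ)).edgeSet.ncard : ℝ)
      ≤ (Fintype.card V : ℝ) ^ ((4 : ℝ) / 3) + (Fintype.card V : ℝ) := by
  classical
  obtain ⟨-, -, h3⟩ := h
  set n := Fintype.card V with hn
  set S := clustered G u ℓ with hS
  set FA : Finset (Sym2 V) :=
    Finset.univ.biUnion (fun w => (closedNbhd G w \ S).image (fun v => s(w, v))) with hFA
  set FB : Finset (Sym2 V) :=
    (Finset.range ℓ).biUnion (fun i => (cluster G u i).image (fun x => s(u i, x))) with hFB
  have hsub : (SimpleGraph.fromEdgeSet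
      ((level G u ℓ).edgeSet ∪ clusterEdges G u ℓ)).edgeSet ⊆ ↑(FA ∪ FB) := by
    intro e he
    rw [SimpleGraph.edgeSet_fromEdgeSet] at he
    obtain ⟨he, -⟩ := he
    simp only [Finset.coe_union, Set.mem_union, Finset.mem_coe, hFA, hFB,
      Finset.mem_biUnion, Finset.mem_image, Finset.mem_univ, true_and, Finset.mem_range]
    rcases he with he | he
    · left
      induction e using Sym2.ind with
      | _ a b =>
        rw [SimpleGraph.mem_edgeSet] at he
        obtain ⟨hadj, hnot⟩ := he
        by_cases hb : b ∈ S
        · have ha : a ∉ S := fun ha' => hnot ⟨ha', hb⟩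
          refine ⟨b, a, Finset.mem_sdiff.mpr ⟨?_, ha⟩, Sym2.eq_swap⟩
          simp [closedNbhd, hadj.symm]
        · refine ⟨a, b, Finset.mem_sdiff.mpr ⟨?_, hb⟩, rfl⟩
          simp [closedNbhd, hadj]
    · obtain ⟨i, hi, x, hx, -, rfl⟩ := he
      exact Or.inr ⟨i, hi, x, hx, rfl⟩
  have hcard : (SimpleGraph.fromEdgeSet
      ((level G u ℓ).edgeSet ∪ clusterEdges G u ℓ)).edgeSet.ncard ≤ FA.card + FB.card := by
    calc (SimpleGraph.fromEdgeSet _).edgeSet.ncard ≤ ((FA ∪ FB : Finset (Sym2 V)) : Set (Sym2 V)).ncard :=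
          Set.ncard_le_ncard hsub (Finset.finite_toSet _)
      _ = (FA ∪ FB).card := Set.ncard_coe_finset _
      _ ≤ FA.card + FB.card := Finset.card_union_le _ _
  have hFAcard : FA.card ≤ n * (t - 1) := by
    calc FA.card ≤ ∑ w : V, ((closedNbhd G w \ S).image (fun v => s(w, v))).card :=
          Finset.card_biUnion_le
      _ ≤ ∑ _w : V, (t - 1) := Finset.sum_le_sum fun w _ =>
          (Finset.card_image_le).trans (Nat.le_sub_one_of_lt (h3 w))
      _ = n * (t - 1) := by simp [hn, Finset.card_univ, mul_comm]
  have hFBcard : FB.card ≤ n := by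
    calc FB.card ≤ ∑ i ∈ Finset.range ℓ, ((cluster G u i).image (fun x => s(u i, x))).card :=
          Finset.card_biUnion_le
      _ ≤ ∑ i ∈ Finset.range ℓ, (cluster G u i).card :=
          Finset.sum_le_sum fun i _ => Finset.card_image_le
      _ = ((Finset.range ℓ).biUnion (cluster G u)).card :=
          (Finset.card_biUnion fun i _ j _ hij => cluster_disjoint G u hij).symm
      _ ≤ n := by rw [hn]; exact Finset.card_le_univ _
  have htot : (SimpleGraph.fromEdgeSet
      ((level G u ℓ).edgeSet ∪ clusterEdges G u ℓ)).edgeSet.ncard ≤ n * (t - 1) + n :=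
    hcard.trans (Nat.add_le_add hFAcard hFBcard)
  have hcast : ((SimpleGraph.fromEdgeSet
      ((level G u ℓ).edgeSet ∪ clusterEdges G u ℓ)).edgeSet.ncard : ℝ)
      ≤ (n : ℝ) * (t : ℝ) + (n : ℝ) := by
    calc ((SimpleGraph.fromEdgeSet _).edgeSet.ncard : ℝ) ≤ ((n * (t - 1) + n : ℕ) : ℝ) := by
          exact_mod_cast htot
      _ ≤ (n : ℝ) * (t : ℝ) + (n : ℝ) := by
          push_cast
          have : ((t - 1 : ℕ) : ℝ) ≤ (t : ℝ) := by exact_mod_cast Nat.sub_le t 1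
          nlinarith [Nat.cast_nonneg (α := ℝ) n]
  refine hcast.trans ?_
  have hrw : (n : ℝ) * (t : ℝ) ≤ (n : ℝ) ^ ((4 : ℝ) / 3) := by
    rcases Nat.eq_zero_or_pos n with h0 | hpos
    · rw [h0, ht, h0]
      simp [Real.zero_rpow (by norm_num : (4:ℝ)/3 ≠ 0)]
    · have hpos' : (0 : ℝ) < (n : ℝ) := by exact_mod_cast hpos
      rw [ht, show (4 : ℝ) / 3 = 1 + 1 / 3 by norm_num, Real.rpow_add hpos', Real.rpow_one]
  linarith
end
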